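/- For any 0 ≤ s ≤ t ≤ 1, H ∈ (0,1), r > 0 and ε ∈ [0,H), one has ∫_ℝ |γ_{s,t}(ξ,r)|² / |ξ|^{2H−1} dξ ≤ C |t−s|^{2ε} / (1 + r^{4(H−ε)}), where the constant C depends only on H and ε. -/

import Mathlib

open MeasureTheory

noncomputable def gammaH (t ξ r : ℝ) : ℂ :=
  Complex.exp (Complex.I * ξ * t) *
    ∫ s in (0:ℝ)..t, Complex.exp (-(s:ℂ) * (r:ℂ)^2) * Complex.exp (-Complex.I * ξ * s)

lemma gammaH_eq (t ξ r : ℝ) (hr : (0:ℝ) < r) :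
    gammaH t ξ r =
      (Complex.exp (Complex.I * ξ * t) - Complex.exp (-(t:ℂ) * (r:ℂ)^2)) /
        ((r:ℂ)^2 + Complex.I * ξ) := by
  have hc : ((r:ℂ)^2 + Complex.I * (ξ:ℂ)) ≠ 0 := by
    intro h
    have h2 : (((r:ℂ)^2 + Complex.I * (ξ:ℂ)).re : ℝ) = 0 := by rw [h]; simp
    simp [Complex.add_re, Complex.mul_re, ← Complex.ofReal_pow] at h2
    nlinarith
  have hint : (∫ s in (0:ℝ)..t, Complex.exp (-(s:ℂ) * (r:ℂ)^2) * Complex.exp (-Complex.I * ξ * s))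
      = (Complex.exp (-((r:ℂ)^2 + Complex.I*ξ) * t) - 1) / (-((r:ℂ)^2 + Complex.I*ξ)) := by
    have h1 : ∀ s : ℝ, Complex.exp (-(s:ℂ) * (r:ℂ)^2) * Complex.exp (-Complex.I * ξ * s)
        = Complex.exp ((-((r:ℂ)^2 + Complex.I*ξ)) * s) := by
      intro s; rw [← Complex.exp_add]; ring_nf
    simp_rw [h1]
    rw [integral_exp_mul_complex (neg_ne_zero.mpr hc)]
    simp
  rw [gammaH, hint]
  rw [div_neg, mul_neg, neg_eq_iff_eq_neg, ← neg_div, neg_sub, ← mul_div_assoc]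
  congr 1
  rw [mul_sub, mul_one]
  congr 1
  rw [← Complex.exp_add]
  congr 1
  ring

lemma abs_c_eq (ξ r : ℝ) : ‖(r:ℂ)^2 + Complex.I * ξ‖ = Real.sqrt (r^4 + ξ^2) := by
  rw [Complex.norm_def, Complex.normSq_apply]
  congr 1
  simp [Complex.add_re, Complex.add_im, Complex.mul_re, Complex.mul_im, ← Complex.ofReal_pow]
  ring

lemma abs_exp_I_sub (a b : ℝ) :
    ‖Complex.exp (Complex.I*a) - Complex.exp (Complex.I*b)‖ ≤ 2 * min 1 |a - b| := by
  have h1 : Complex.exp (Complex.I*a) - Complex.exp (Complex.I*b)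
      = Complex.exp (Complex.I*b) * (Complex.exp (Complex.I*((a - b : ℝ):ℂ)) - 1) := by
    rw [mul_sub, mul_one, ← Complex.exp_add]
    push_cast
    ring_nf
  have habs1 : ∀ x : ℝ, ‖Complex.exp (Complex.I*x)‖ = 1 := by
    intro x; rw [Complex.norm_exp]; simp
  have hab : ‖Complex.I*((a - b : ℝ):ℂ)‖ = |a - b| := by
    rw [norm_mul, Complex.norm_I, one_mul, Complex.norm_real, Real.norm_eq_abs]
  rw [h1, norm_mul, habs1, one_mul]
  rcases le_total |a - b| 1 with h | h
  · have h2 := Complex.norm_exp_sub_one_le (x := Complex.I*((a - b : ℝ):ℂ)) (by rw [hab]; exact h)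
    rw [hab] at h2
    rw [min_eq_right h]
    exact h2
  · rw [min_eq_left h]
    have h3 := norm_sub_le (Complex.exp (Complex.I*((a - b : ℝ):ℂ))) 1
    calc ‖Complex.exp (Complex.I*((a - b : ℝ):ℂ)) - 1‖
        ≤ ‖Complex.exp (Complex.I*((a - b : ℝ):ℂ))‖ + ‖(1:ℂ)‖ := h3
      _ ≤ 2 * 1 := by rw [habs1]; norm_num

lemma exp_diff_bound {s t x : ℝ} (hs : 0 ≤ s) (hst : s ≤ t) (hx : 0 ≤ x) :
    |Real.exp (-(s*x)) - Real.exp (-(t*x))| ≤ min 1 ((t-s)*x) := by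
  have h1 : Real.exp (-(t*x)) ≤ Real.exp (-(s*x)) :=
    Real.exp_le_exp.mpr (by nlinarith)
  rw [abs_of_nonneg (by linarith)]
  refine le_min ?_ ?_
  · have h2 : 0 < Real.exp (-(t*x)) := Real.exp_pos _
    have h3 : Real.exp (-(s*x)) ≤ 1 := Real.exp_le_one_iff.mpr (by nlinarith)
    linarith
  · have hy : (0:ℝ) ≤ (t-s)*x := by nlinarith
    have hle : 1 - Real.exp (-((t-s)*x)) ≤ (t-s)*x := by
      have := Real.add_one_le_exp (-((t-s)*x)); linarith
    have hsx : Real.exp (-(s*x)) ≤ 1 := Real.exp_le_one_iff.mpr (by nlinarith)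
    have hfac : Real.exp (-(t*x)) = Real.exp (-(s*x)) * Real.exp (-((t-s)*x)) := by
      rw [← Real.exp_add]; congr 1; ring
    have hey : Real.exp (-((t-s)*x)) ≤ 1 := Real.exp_le_one_iff.mpr (by linarith)
    nlinarith [Real.exp_pos (-((t-s)*x)), Real.exp_pos (-(s*x))]

lemma min_one_le_rpow {x ε : ℝ} (hx : 0 ≤ x) (hε : 0 ≤ ε) (hε1 : ε ≤ 1) :
    min 1 x ≤ x ^ ε := by
  rcases le_total x 1 with h | h
  · rcases eq_or_lt_of_le hx with h0 | h0
    · simp [← h0]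
      positivity
    · calc min 1 x ≤ x := min_le_right _ _
        _ = x ^ (1:ℝ) := (Real.rpow_one x).symm
        _ ≤ x ^ ε := Real.rpow_le_rpow_of_exponent_ge h0 h hε1
  · calc min 1 x ≤ 1 := min_le_left _ _
      _ = (1:ℝ) ^ ε := (Real.one_rpow ε).symm
      _ ≤ x ^ ε := Real.rpow_le_rpow (by norm_num) h hε

lemma self_le_rpow {x ε : ℝ} (hx : 0 ≤ x) (hx1 : x ≤ 1) (hε : ε ≤ 1) : x ≤ x ^ ε := by
  rcases eq_or_lt_of_le hx with h0 | h0
  · rw [← h0]; positivity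
  · calc x = x ^ (1:ℝ) := (Real.rpow_one x).symm
      _ ≤ x ^ ε := Real.rpow_le_rpow_of_exponent_ge h0 hx1 hε

lemma gamma_bounds {s t ξ r ε : ℝ} (hr : 0 < r) (hs : 0 ≤ s) (hst : s ≤ t) (ht : t ≤ 1)
    (hε : 0 ≤ ε) (hε1 : ε ≤ 1) (hξ : ξ ≠ 0) :
    ‖gammaH t ξ r - gammaH s ξ r‖ ≤ 3 * (t-s)^ε ∧
    ‖gammaH t ξ r - gammaH s ξ r‖ ≤
      3 * (t-s)^ε * (|ξ|^ε + r^(2*ε)) / Real.sqrt (r^4 + ξ^2) := by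
  set δ := t - s with hδdef
  have hδ0 : 0 ≤ δ := by rw [hδdef]; linarith
  have hδ1 : δ ≤ 1 := by rw [hδdef]; linarith
  have hξpos : 0 < |ξ| := abs_pos.mpr hξ
  have hsq : 0 < Real.sqrt (r^4 + ξ^2) := Real.sqrt_pos.mpr (by positivity)
  have hsqξ : |ξ| ≤ Real.sqrt (r^4 + ξ^2) := by
    rw [← Real.sqrt_sq_eq_abs]
    exact Real.sqrt_le_sqrt (by nlinarith [pow_nonneg hr.le 4])
  have hsqr : r^2 ≤ Real.sqrt (r^4 + ξ^2) := by
    rw [← Real.sqrt_sq (by positivity : (0:ℝ) ≤ r^2)]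
    exact Real.sqrt_le_sqrt (by nlinarith)
  -- difference formula
  have hdiff : gammaH t ξ r - gammaH s ξ r =
      ((Complex.exp (Complex.I*ξ*t) - Complex.exp (Complex.I*ξ*s)) +
       (Complex.exp (-(s:ℂ)*(r:ℂ)^2) - Complex.exp (-(t:ℂ)*(r:ℂ)^2))) / ((r:ℂ)^2 + Complex.I*ξ) := by
    rw [gammaH_eq t ξ r hr, gammaH_eq s ξ r hr]
    rw [div_sub_div_same]
    congr 1
    ring
  have hA : ‖Complex.exp (Complex.I*ξ*t) - Complex.exp (Complex.I*ξ*s)‖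
      ≤ 2 * min 1 (|ξ| * δ) := by
    have h := abs_exp_I_sub (ξ*t) (ξ*s)
    have e1 : (Complex.I*((ξ*t:ℝ):ℂ)) = Complex.I*(ξ:ℂ)*(t:ℂ) := by push_cast; ring
    have e2 : (Complex.I*((ξ*s:ℝ):ℂ)) = Complex.I*(ξ:ℂ)*(s:ℂ) := by push_cast; ring
    rw [e1, e2] at h
    have e3 : |ξ*t - ξ*s| = |ξ| * δ := by
      have e4 : ξ*t - ξ*s = ξ*(t-s) := by ring
      rw [e4, abs_mul, abs_of_nonneg (by linarith : (0:ℝ) ≤ t - s)]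
    rw [e3] at h
    exact h
  have hB : ‖Complex.exp (-(s:ℂ)*(r:ℂ)^2) - Complex.exp (-(t:ℂ)*(r:ℂ)^2)‖
      ≤ min 1 (δ*(r^2)) := by
    have h1 : Complex.exp (-(s:ℂ)*(r:ℂ)^2) = ((Real.exp (-(s*r^2)) : ℝ) : ℂ) := by
      rw [Complex.ofReal_exp]; push_cast; ring_nf
    have h2 : Complex.exp (-(t:ℂ)*(r:ℂ)^2) = ((Real.exp (-(t*r^2)) : ℝ) : ℂ) := by
      rw [Complex.ofReal_exp]; push_cast; ring_nf
    rw [h1, h2, ← Complex.ofReal_sub, Complex.norm_real, Real.norm_eq_abs]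
    have := exp_diff_bound hs hst (by positivity : (0:ℝ) ≤ r^2)
    simpa [hδdef] using this
  have habsc : ‖(r:ℂ)^2 + Complex.I*ξ‖ = Real.sqrt (r^4 + ξ^2) := abs_c_eq ξ r
  have habs : ‖gammaH t ξ r - gammaH s ξ r‖ ≤
      (2 * min 1 (|ξ| * δ) + min 1 (δ*(r^2))) / Real.sqrt (r^4 + ξ^2) := by
    rw [hdiff, norm_div, habsc]
    exact (div_le_div_iff_of_pos_right hsq).mpr ((norm_add_le _ _).trans (add_le_add hA hB))
  have hδε : δ ≤ δ^ε := self_le_rpow hδ0 hδ1 hε1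
  have hδεnn : 0 ≤ δ^ε := Real.rpow_nonneg hδ0 ε
  constructor
  · have t1 : min 1 (|ξ| * δ) / Real.sqrt (r^4+ξ^2) ≤ δ := by
      have h1 : min 1 (|ξ| * δ) / Real.sqrt (r^4+ξ^2) ≤ (|ξ| * δ) / |ξ| :=
        div_le_div₀ (by positivity) (min_le_right _ _) hξpos hsqξ
      have h1' : (|ξ| * δ)/|ξ| = δ := by field_simp
      rwa [h1'] at h1
    have t2 : min 1 (δ*(r^2)) / Real.sqrt (r^4+ξ^2) ≤ δ := by
      have h2 : min 1 (δ*(r^2)) / Real.sqrt (r^4+ξ^2) ≤ (δ*(r^2)) / (r^2) :=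
        div_le_div₀ (by positivity) (min_le_right _ _) (by positivity) hsqr
      have h2' : (δ*(r^2))/(r^2) = δ := by field_simp
      rwa [h2'] at h2
    refine habs.trans ?_
    rw [add_div, mul_div_assoc]
    have := mul_le_mul_of_nonneg_left t1 (by norm_num : (0:ℝ) ≤ 2)
    linarith
  · refine habs.trans ?_
    rw [div_le_div_iff_of_pos_right hsq]
    have hr2ε : (r^2) ^ ε = r ^ (2*ε) := by
      rw [← Real.rpow_natCast r 2, ← Real.rpow_mul hr.le]
      norm_num
    have hm1 : min 1 (|ξ| * δ) ≤ |ξ|^ε * δ^ε := by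
      have := min_one_le_rpow (by positivity : (0:ℝ) ≤ |ξ| * δ) hε hε1
      rwa [Real.mul_rpow (abs_nonneg _) hδ0] at this
    have hm2 : min 1 (δ*(r^2)) ≤ δ^ε * r^(2*ε) := by
      have := min_one_le_rpow (by positivity : (0:ℝ) ≤ δ * r^2) hε hε1
      rwa [Real.mul_rpow hδ0 (by positivity), hr2ε] at this
    have hξε : 0 ≤ |ξ|^ε := Real.rpow_nonneg (abs_nonneg _) ε
    have hrε : 0 ≤ r^(2*ε) := Real.rpow_nonneg hr.le _
    nlinarith [mul_nonneg hδεnn hξε, mul_nonneg hδεnn hrε]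


lemma measurable_abs_rpow (p : ℝ) : Measurable (fun x : ℝ => |x| ^ p) := by
  have h : (fun x : ℝ => |x| ^ p) =
      Set.piecewise {(0:ℝ)} (fun _ => (0:ℝ)^p) (fun x => Real.exp (Real.log |x| * p)) := by
    ext x
    by_cases hx : x = 0
    · simp [hx]
    · rw [Set.piecewise_eq_of_notMem _ _ _ (by simpa using hx),
        ← Real.rpow_def_of_pos (abs_pos.mpr hx)]
  rw [h]
  exact Measurable.piecewise (measurableSet_singleton 0) measurable_const
    (Real.measurable_exp.comp ((Real.measurable_log.comp measurable_abs).mul_const p))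

open Set in
lemma mfun_integrable {p q : ℝ} (hp : -1 < p) (hq : q < -1) :
    Integrable (fun x : ℝ => min (|x| ^ p) (|x| ^ q)) := by
  have hmeas : Measurable (fun x : ℝ => min (|x| ^ p) (|x| ^ q)) :=
    Measurable.min (measurable_abs_rpow p) (measurable_abs_rpow q)
  have hnn : ∀ x : ℝ, 0 ≤ min (|x| ^ p) (|x| ^ q) := fun x =>
    le_min (Real.rpow_nonneg (abs_nonneg x) p) (Real.rpow_nonneg (abs_nonneg x) q)
  have hIoi : IntegrableOn (fun x : ℝ => min (|x| ^ p) (|x| ^ q)) (Ioi 0) := by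
    have h1 : IntegrableOn (fun x : ℝ => min (|x| ^ p) (|x| ^ q)) (Ioc 0 1) := by
      refine Integrable.mono' (g := fun x : ℝ => x ^ p)
        ((intervalIntegral.intervalIntegrable_rpow' hp (a := 0) (b := 1)).1) 
        (hmeas.aestronglyMeasurable.restrict) ?_
      filter_upwards [ae_restrict_mem measurableSet_Ioc] with x hx
      rw [Real.norm_of_nonneg (hnn x)]
      calc min (|x| ^ p) (|x| ^ q) ≤ |x| ^ p := min_le_left _ _
        _ = x ^ p := by rw [abs_of_pos hx.1]
    have h2 : IntegrableOn (fun x : ℝ => min (|x| ^ p) (|x| ^ q)) (Ioi 1) := by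
      refine Integrable.mono' (g := fun x : ℝ => x ^ q)
        (integrableOn_Ioi_rpow_of_lt hq one_pos)
        (hmeas.aestronglyMeasurable.restrict) ?_
      filter_upwards [ae_restrict_mem measurableSet_Ioi] with x hx
      rw [Real.norm_of_nonneg (hnn x)]
      calc min (|x| ^ p) (|x| ^ q) ≤ |x| ^ q := min_le_right _ _
        _ = x ^ q := by rw [abs_of_pos (lt_trans one_pos hx)]
    have := h1.union h2
    refine this.mono_set ?_
    intro x hx
    rcases le_or_gt x 1 with h | h
    · exact Or.inl ⟨hx, h⟩
    · exact Or.inr h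
  have hIic : IntegrableOn (fun x : ℝ => min (|x| ^ p) (|x| ^ q)) (Iic 0) := by
    rw [← Measure.map_neg_eq_self (volume : Measure ℝ)]
    have m : MeasurableEmbedding fun x : ℝ => -x := (Homeomorph.neg ℝ).measurableEmbedding
    rw [m.integrableOn_map_iff]
    simp_rw [Function.comp_def, abs_neg, neg_preimage, neg_Iic, neg_zero]
    exact Iff.mpr integrableOn_Ici_iff_integrableOn_Ioi hIoi
  rw [← integrableOn_univ, ← Iic_union_Ioi (a := (0:ℝ))]
  exact hIic.union hIoi

lemma gamma_sq_bounds {s t ξ r ε : ℝ} (hr : 0 < r) (hs : 0 ≤ s) (hst : s ≤ t) (ht : t ≤ 1)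
    (hε : 0 ≤ ε) (hε1 : ε ≤ 1) (hξ : ξ ≠ 0) :
    (‖gammaH t ξ r - gammaH s ξ r‖)^2 ≤ 9 * (t-s)^(2*ε) ∧
    (‖gammaH t ξ r - gammaH s ξ r‖)^2 ≤
      9 * (t-s)^(2*ε) * (|ξ|^ε + r^(2*ε))^2 / (r^4 + ξ^2) := by
  obtain ⟨g1, g2⟩ := gamma_bounds hr hs hst ht hε hε1 hξ
  have hδ0 : (0:ℝ) ≤ t - s := by linarith
  have hδε : (0:ℝ) ≤ (t-s)^ε := Real.rpow_nonneg hδ0 ε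
  have h2ε : ((t-s)^ε)^2 = (t-s)^(2*ε) := by
    rw [← Real.rpow_natCast ((t-s)^ε) 2, ← Real.rpow_mul hδ0]
    norm_num
    rw [mul_comm]
  have hS : (0:ℝ) < r^4 + ξ^2 := by positivity
  have hAnn : (0:ℝ) ≤ |ξ|^ε + r^(2*ε) := by positivity
  constructor
  · have := pow_le_pow_left₀ (norm_nonneg _) g1 2
    calc (‖gammaH t ξ r - gammaH s ξ r‖)^2 ≤ (3*(t-s)^ε)^2 := this
      _ = 9 * (t-s)^(2*ε) := by rw [mul_pow, h2ε]; norm_num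
  · have h3 : (0:ℝ) ≤ 3 * (t-s)^ε * (|ξ|^ε + r^(2*ε)) := by positivity
    have := pow_le_pow_left₀ (norm_nonneg _) g2 2
    calc (‖gammaH t ξ r - gammaH s ξ r‖)^2
        ≤ (3*(t-s)^ε * (|ξ|^ε + r^(2*ε)) / Real.sqrt (r^4+ξ^2))^2 := this
      _ = 9 * (t-s)^(2*ε) * (|ξ|^ε + r^(2*ε))^2 / (r^4 + ξ^2) := by
          rw [div_pow, Real.sq_sqrt hS.le, mul_pow, mul_pow, h2ε]
          norm_num

lemma pointwise_small {H s t ξ r ε : ℝ} (hH0 : 0 < H) (hH1 : H < 1)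
    (hr : 0 < r) (hr1 : r ≤ 1) (hs : 0 ≤ s) (hst : s ≤ t) (ht : t ≤ 1)
    (hε : 0 ≤ ε) (hεH : ε < H) (hξ : ξ ≠ 0) :
    (‖gammaH t ξ r - gammaH s ξ r‖)^2 / |ξ| ^ (2*H - 1) ≤
      36 * (t-s)^(2*ε) * min (|ξ| ^ (1-2*H)) (|ξ| ^ (2*ε-2*H-1)) := by
  have hε1 : ε ≤ 1 := by linarith
  obtain ⟨g1, g2⟩ := gamma_sq_bounds hr hs hst ht hε hε1 hξ
  have hξpos : 0 < |ξ| := abs_pos.mpr hξ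
  have hD : (0:ℝ) < |ξ| ^ (2*H - 1) := Real.rpow_pos_of_pos hξpos _
  have hδ0 : (0:ℝ) ≤ t - s := by linarith
  have hδ2ε : (0:ℝ) ≤ (t-s)^(2*ε) := Real.rpow_nonneg hδ0 _
  rw [div_le_iff₀ hD]
  rcases le_total |ξ| 1 with hξ1 | hξ1
  · have hmin : min (|ξ| ^ (1-2*H)) (|ξ| ^ (2*ε-2*H-1)) = |ξ| ^ (1-2*H) :=
      min_eq_left (Real.rpow_le_rpow_of_exponent_ge hξpos hξ1 (by linarith))
    rw [hmin]
    have key : 36 * (t-s)^(2*ε) * |ξ| ^ (1-2*H) * |ξ| ^ (2*H-1) = 36 * (t-s)^(2*ε) := by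
      rw [mul_assoc, ← Real.rpow_add hξpos]
      norm_num
    rw [key]
    linarith
  · have hmin : min (|ξ| ^ (1-2*H)) (|ξ| ^ (2*ε-2*H-1)) = |ξ| ^ (2*ε-2*H-1) :=
      min_eq_right (Real.rpow_le_rpow_of_exponent_le hξ1 (by linarith))
    rw [hmin]
    have hr2ε : r^(2*ε) ≤ |ξ|^ε := by
      calc r^(2*ε) ≤ 1^(2*ε) := Real.rpow_le_rpow hr.le hr1 (by linarith)
        _ = 1 := Real.one_rpow _
        _ = 1^ε := (Real.one_rpow _).symm
        _ ≤ |ξ|^ε := Real.rpow_le_rpow (by norm_num) hξ1 hε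
    have hξεnn : (0:ℝ) ≤ |ξ|^ε := Real.rpow_nonneg (abs_nonneg _) _
    have hnum : (|ξ|^ε + r^(2*ε))^2 ≤ 4 * (|ξ|^ε)^2 := by nlinarith [Real.rpow_nonneg hr.le (2*ε)]
    have hden : |ξ|^(2:ℝ) ≤ r^4 + ξ^2 := by
      rw [Real.rpow_two, sq_abs]
      nlinarith [pow_nonneg hr.le 4]
    have hsq2 : (|ξ|^ε)^2 = |ξ|^(2*ε) := by
      rw [← Real.rpow_natCast (|ξ|^ε) 2, ← Real.rpow_mul (abs_nonneg _)]
      norm_num; rw [mul_comm]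
    have hstep : (‖gammaH t ξ r - gammaH s ξ r‖)^2 ≤
        36 * (t-s)^(2*ε) * |ξ|^(2*ε) / |ξ|^(2:ℝ) := by
      refine g2.trans ?_
      rw [div_le_div_iff₀ (by positivity) (Real.rpow_pos_of_pos hξpos _)]
      calc 9*(t-s)^(2*ε) * (|ξ|^ε + r^(2*ε))^2 * |ξ|^(2:ℝ)
          ≤ 9*(t-s)^(2*ε) * (4*(|ξ|^ε)^2) * (r^4+ξ^2) := by
            apply mul_le_mul ?_ hden (Real.rpow_nonneg (abs_nonneg _) _) (by positivity)
            exact mul_le_mul_of_nonneg_left hnum (by positivity)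
        _ = 36 * (t-s)^(2*ε) * |ξ|^(2*ε) * (r^4+ξ^2) := by rw [hsq2]; ring
    refine hstep.trans ?_
    rw [div_le_iff₀ (Real.rpow_pos_of_pos hξpos _)]
    have e : |ξ| ^ (2*ε-2*H-1) * |ξ| ^ (2*H-1) * |ξ| ^ (2:ℝ) = |ξ| ^ (2*ε) := by
      rw [← Real.rpow_add hξpos, ← Real.rpow_add hξpos]
      congr 1
      ring
    calc 36 * (t-s)^(2*ε) * |ξ|^(2*ε)
        = 36 * (t-s)^(2*ε) * (|ξ| ^ (2*ε-2*H-1) * |ξ| ^ (2*H-1) * |ξ| ^ (2:ℝ)) := by rw [e]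
      _ = 36 * (t-s)^(2*ε) * |ξ| ^ (2*ε-2*H-1) * |ξ| ^ (2*H-1) * |ξ| ^ (2:ℝ) := by ring
      _ ≤ 36 * (t-s)^(2*ε) * |ξ| ^ (2*ε-2*H-1) * |ξ| ^ (2*H-1) * |ξ| ^ (2:ℝ) := le_refl _

set_option maxHeartbeats 1000000 in
lemma pointwise_large {H s t ξ r ε : ℝ} (hH0 : 0 < H) (hH1 : H < 1)
    (hr1 : 1 ≤ r) (hs : 0 ≤ s) (hst : s ≤ t) (ht : t ≤ 1)
    (hε : 0 ≤ ε) (hεH : ε < H) (hξ : ξ ≠ 0) :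
    (‖gammaH t ξ r - gammaH s ξ r‖)^2 / |ξ| ^ (2*H - 1) ≤
      36 * (t-s)^(2*ε) *
        (r^(4*ε-4*H-2) * min (|ξ/r^2| ^ (1-2*H)) (|ξ/r^2| ^ (2*ε-2*H-1))) := by
  have hr : (0:ℝ) < r := lt_of_lt_of_le one_pos hr1
  have hε1 : ε ≤ 1 := by linarith
  obtain ⟨g1, g2⟩ := gamma_sq_bounds hr hs hst ht hε hε1 hξ
  have hξpos : 0 < |ξ| := abs_pos.mpr hξ
  have hr2 : (0:ℝ) < r^2 := by positivity
  have hD : (0:ℝ) < |ξ| ^ (2*H - 1) := Real.rpow_pos_of_pos hξpos _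
  have hδ0 : (0:ℝ) ≤ t - s := by linarith
  have hδ2ε : (0:ℝ) ≤ (t-s)^(2*ε) := Real.rpow_nonneg hδ0 _
  have habsdiv : |ξ/r^2| = |ξ|/r^2 := by
    rw [abs_div, abs_of_pos hr2]
  have hdivpos : 0 < |ξ/r^2| := by rw [habsdiv]; positivity
  have hr2e : ∀ a : ℝ, (r^2 : ℝ) ^ a = r ^ (2*a) := by
    intro a
    rw [← Real.rpow_natCast r 2, ← Real.rpow_mul hr.le]
    norm_num
  have hrpow_pos : ∀ a : ℝ, (0:ℝ) < r ^ a := fun a => Real.rpow_pos_of_pos hr a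
  have hsplit : ∀ a : ℝ, |ξ/r^2| ^ a = |ξ|^a / r^(2*a) := by
    intro a
    rw [habsdiv, Real.div_rpow (abs_nonneg _) hr2.le, hr2e]
  rw [div_le_iff₀ hD]
  rcases le_total |ξ| (r^2) with hc | hc
  · have hle1 : |ξ/r^2| ≤ 1 := by
      rw [habsdiv, div_le_one hr2]; exact hc
    have hmin : min (|ξ/r^2| ^ (1-2*H)) (|ξ/r^2| ^ (2*ε-2*H-1)) = |ξ/r^2| ^ (1-2*H) :=
      min_eq_left (Real.rpow_le_rpow_of_exponent_ge hdivpos hle1 (by linarith))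
    rw [hmin, hsplit]
    -- target:  abs² ≤ 36 δ (r^{4ε-4H-2} * (|ξ|^{1-2H}/r^{2-4H})) * |ξ|^{2H-1}
    have eξ : |ξ| ^ (1-2*H) * |ξ| ^ (2*H-1) = 1 := by
      rw [← Real.rpow_add hξpos]; norm_num
    have erhs : 36 * (t-s)^(2*ε) * (r^(4*ε-4*H-2) * (|ξ|^(1-2*H) / r^(2*(1-2*H)))) * |ξ|^(2*H-1)
        = 36 * (t-s)^(2*ε) * r^(4*ε-4) := by
      rw [div_eq_mul_inv, ← Real.rpow_neg hr.le]
      have : r^(4*ε-4*H-2) * r^(-(2*(1-2*H))) = r^(4*ε-4) := by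
        rw [← Real.rpow_add hr]; congr 1; ring
      calc 36 * (t-s)^(2*ε) * (r^(4*ε-4*H-2) * (|ξ|^(1-2*H) * r^(-(2*(1-2*H))))) * |ξ|^(2*H-1)
          = 36 * (t-s)^(2*ε) * (r^(4*ε-4*H-2) * r^(-(2*(1-2*H)))) * (|ξ|^(1-2*H) * |ξ|^(2*H-1)) := by
            ring
        _ = 36 * (t-s)^(2*ε) * r^(4*ε-4) := by rw [this, eξ, mul_one]
    rw [erhs]
    -- abs² ≤ 36 δ r^{4ε-4}
    have hnum : (|ξ|^ε + r^(2*ε))^2 ≤ 4 * (r^(2*ε))^2 := by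
      have h1 : |ξ|^ε ≤ r^(2*ε) := by
        calc |ξ|^ε ≤ (r^2)^ε := Real.rpow_le_rpow (abs_nonneg _) hc hε
          _ = r^(2*ε) := hr2e ε
      nlinarith [Real.rpow_nonneg (abs_nonneg ξ) ε, (hrpow_pos (2*ε)).le]
    have hden : r^((4:ℝ)) ≤ r^4 + ξ^2 := by
      rw [show ((4:ℝ)) = ((4:ℕ):ℝ) by norm_num, Real.rpow_natCast]
      nlinarith [sq_nonneg ξ]
    refine g2.trans ?_
    rw [div_le_iff₀ (by positivity)]
    have e2 : (r^(2*ε))^2 = r^(4*ε) := by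
      rw [← Real.rpow_natCast (r^(2*ε)) 2, ← Real.rpow_mul hr.le]
      congr 1; ring
    calc 9*(t-s)^(2*ε) * (|ξ|^ε + r^(2*ε))^2
        ≤ 9*(t-s)^(2*ε) * (4*(r^(2*ε))^2) := by
          exact mul_le_mul_of_nonneg_left hnum (by positivity)
      _ = 36 * (t-s)^(2*ε) * r^(4*ε) := by rw [e2]; ring
      _ = 36 * (t-s)^(2*ε) * (r^(4*ε-4) * r^((4:ℝ))) := by
          rw [← Real.rpow_add hr]; norm_num
      _ ≤ 36 * (t-s)^(2*ε) * (r^(4*ε-4) * (r^4+ξ^2)) := by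
          refine mul_le_mul_of_nonneg_left ?_ (by positivity)
          exact mul_le_mul_of_nonneg_left hden (hrpow_pos _).le
      _ = 36 * (t-s)^(2*ε) * r^(4*ε-4) * (r^4+ξ^2) := by ring
  · have hge1 : 1 ≤ |ξ/r^2| := by
      rw [habsdiv, le_div_iff₀ hr2, one_mul]; exact hc
    have hmin : min (|ξ/r^2| ^ (1-2*H)) (|ξ/r^2| ^ (2*ε-2*H-1)) = |ξ/r^2| ^ (2*ε-2*H-1) :=
      min_eq_right (Real.rpow_le_rpow_of_exponent_le hge1 (by linarith))
    rw [hmin, hsplit]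
    have erhs : 36 * (t-s)^(2*ε) * (r^(4*ε-4*H-2) * (|ξ|^(2*ε-2*H-1) / r^(2*(2*ε-2*H-1)))) * |ξ|^(2*H-1)
        = 36 * (t-s)^(2*ε) * (|ξ|^(2*ε-2*H-1) * |ξ|^(2*H-1)) := by
      rw [div_eq_mul_inv, ← Real.rpow_neg hr.le]
      have hr0 : r^(4*ε-4*H-2) * r^(-(2*(2*ε-2*H-1))) = 1 := by
        rw [← Real.rpow_add hr]
        have : 4*ε-4*H-2 + -(2*(2*ε-2*H-1)) = 0 := by ring
        rw [this, Real.rpow_zero]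
      calc 36 * (t-s)^(2*ε) * (r^(4*ε-4*H-2) * (|ξ|^(2*ε-2*H-1) * r^(-(2*(2*ε-2*H-1))))) * |ξ|^(2*H-1)
          = 36 * (t-s)^(2*ε) * (r^(4*ε-4*H-2) * r^(-(2*(2*ε-2*H-1)))) * (|ξ|^(2*ε-2*H-1) * |ξ|^(2*H-1)) := by
            ring
        _ = 36 * (t-s)^(2*ε) * (|ξ|^(2*ε-2*H-1) * |ξ|^(2*H-1)) := by rw [hr0]; ring
    rw [erhs]
    have hr2ε : r^(2*ε) ≤ |ξ|^ε := by
      calc r^(2*ε) = (r^2)^ε := (hr2e ε).symm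
        _ ≤ |ξ|^ε := Real.rpow_le_rpow hr2.le hc hε
    have hnum : (|ξ|^ε + r^(2*ε))^2 ≤ 4 * (|ξ|^ε)^2 := by
      nlinarith [Real.rpow_nonneg hr.le (2*ε), Real.rpow_nonneg (abs_nonneg ξ) ε]
    have hden : |ξ|^(2:ℝ) ≤ r^4 + ξ^2 := by
      rw [Real.rpow_two, sq_abs]
      nlinarith [pow_nonneg hr.le 4]
    have hsq2 : (|ξ|^ε)^2 = |ξ|^(2*ε) := by
      rw [← Real.rpow_natCast (|ξ|^ε) 2, ← Real.rpow_mul (abs_nonneg _)]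
      congr 1; ring
    refine g2.trans ?_
    rw [div_le_iff₀ (by positivity)]
    have eξ2 : |ξ|^(2*ε-2*H-1) * |ξ|^(2*H-1) * |ξ|^(2:ℝ) = |ξ|^(2*ε) := by
      rw [← Real.rpow_add hξpos, ← Real.rpow_add hξpos]
      congr 1; ring
    calc 9*(t-s)^(2*ε) * (|ξ|^ε + r^(2*ε))^2
        ≤ 9*(t-s)^(2*ε) * (4*(|ξ|^ε)^2) := mul_le_mul_of_nonneg_left hnum (by positivity)
      _ = 36 * (t-s)^(2*ε) * |ξ|^(2*ε) := by rw [hsq2]; ring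
      _ = 36 * (t-s)^(2*ε) * (|ξ|^(2*ε-2*H-1) * |ξ|^(2*H-1)) * |ξ|^(2:ℝ) := by
          rw [show 36 * (t-s)^(2*ε) * (|ξ|^(2*ε-2*H-1) * |ξ|^(2*H-1)) * |ξ|^(2:ℝ)
              = 36 * (t-s)^(2*ε) * (|ξ|^(2*ε-2*H-1) * |ξ|^(2*H-1) * |ξ|^(2:ℝ)) from by ring, eξ2]
      _ ≤ 36 * (t-s)^(2*ε) * (|ξ|^(2*ε-2*H-1) * |ξ|^(2*H-1)) * (r^4+ξ^2) := by
          refine mul_le_mul_of_nonneg_left ?_ ?_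
          · rw [Real.rpow_two, sq_abs]
            nlinarith [pow_nonneg hr.le 4]
          · positivity

theorem stmt4 (H ε : ℝ) (hH : H ∈ Set.Ioo (0:ℝ) 1) (hε : 0 ≤ ε) (hεH : ε < H) :
    ∃ C : ℝ, 0 < C ∧ ∀ s t r : ℝ, 0 ≤ s → s ≤ t → t ≤ 1 → 0 < r →
      (∫ ξ : ℝ, (‖gammaH t ξ r - gammaH s ξ r‖)^2 / |ξ| ^ (2*H - 1)) ≤
        C * |t - s| ^ (2*ε) / (1 + r ^ (4*(H - ε))) := by
  obtain ⟨hH0, hH1⟩ := hH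
  have hε1 : ε ≤ 1 := le_of_lt (lt_of_lt_of_le hεH hH1.le)
  have hp : (-1:ℝ) < 1 - 2*H := by linarith
  have hq : 2*ε - 2*H - 1 < -1 := by linarith
  have hm : Integrable (fun x : ℝ => min (|x| ^ (1-2*H)) (|x| ^ (2*ε-2*H-1))) :=
    mfun_integrable hp hq
  set M := ∫ x : ℝ, min (|x| ^ (1-2*H)) (|x| ^ (2*ε-2*H-1)) with hMdef
  have hM0 : 0 ≤ M := integral_nonneg (fun x =>
    le_min (Real.rpow_nonneg (abs_nonneg _) _) (Real.rpow_nonneg (abs_nonneg _) _))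
  refine ⟨100*(M+1), by positivity, ?_⟩
  intro s t r hs hst ht hr
  have hδ0 : (0:ℝ) ≤ t - s := by linarith
  have habsδ : |t - s| = t - s := abs_of_nonneg hδ0
  have hδ2ε : (0:ℝ) ≤ (t-s)^(2*ε) := Real.rpow_nonneg hδ0 _
  have hfnn : 0 ≤ᵐ[volume] fun ξ : ℝ =>
      (‖gammaH t ξ r - gammaH s ξ r‖)^2 / |ξ| ^ (2*H - 1) :=
    Filter.Eventually.of_forall (fun ξ => div_nonneg (pow_nonneg (norm_nonneg _) 2)
      (Real.rpow_nonneg (abs_nonneg _) _))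
  have hae : ∀ᵐ ξ : ℝ, ξ ≠ (0:ℝ) := by
    rw [ae_iff]
    simp only [not_not]
    have : {a : ℝ | a = 0} = {(0:ℝ)} := by ext x; simp
    rw [this]
    exact measure_singleton 0
  have hrapos : (0:ℝ) < r^(4*(H-ε)) := Real.rpow_pos_of_pos hr _
  have hden_pos : (0:ℝ) < 1 + r^(4*(H-ε)) := by linarith
  rw [habsδ]
  rcases le_total r 1 with hcase | hcase
  · -- small r
    have hg : Integrable (fun ξ : ℝ =>
        36*(t-s)^(2*ε) * min (|ξ| ^ (1-2*H)) (|ξ| ^ (2*ε-2*H-1))) := hm.const_mul _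
    have hle : (∫ ξ : ℝ, (‖gammaH t ξ r - gammaH s ξ r‖)^2 / |ξ| ^ (2*H - 1))
        ≤ ∫ ξ : ℝ, 36*(t-s)^(2*ε) * min (|ξ| ^ (1-2*H)) (|ξ| ^ (2*ε-2*H-1)) := by
      refine integral_mono_of_nonneg hfnn hg ?_
      filter_upwards [hae] with ξ hξ0
      exact pointwise_small hH0 hH1 hr hcase hs hst ht hε hεH hξ0
    have hint : (∫ ξ : ℝ, 36*(t-s)^(2*ε) * min (|ξ| ^ (1-2*H)) (|ξ| ^ (2*ε-2*H-1)))
        = 36*(t-s)^(2*ε) * M := by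
      rw [integral_const_mul]
    rw [hint] at hle
    refine hle.trans ?_
    rw [le_div_iff₀ hden_pos]
    have hra1 : r^(4*(H-ε)) ≤ 1 :=
      Real.rpow_le_one hr.le hcase (by linarith)
    nlinarith [mul_nonneg hδ2ε hM0]
  · -- large r
    have hr2 : (0:ℝ) < r^2 := by positivity
    have h1 : Integrable (fun ξ : ℝ =>
        min (|ξ/r^2| ^ (1-2*H)) (|ξ/r^2| ^ (2*ε-2*H-1))) := hm.comp_div (ne_of_gt hr2)
    have hg : Integrable (fun ξ : ℝ => 36*(t-s)^(2*ε) *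
        (r^(4*ε-4*H-2) * min (|ξ/r^2| ^ (1-2*H)) (|ξ/r^2| ^ (2*ε-2*H-1)))) :=
      (h1.const_mul _).const_mul _
    have hle : (∫ ξ : ℝ, (‖gammaH t ξ r - gammaH s ξ r‖)^2 / |ξ| ^ (2*H - 1))
        ≤ ∫ ξ : ℝ, 36*(t-s)^(2*ε) *
          (r^(4*ε-4*H-2) * min (|ξ/r^2| ^ (1-2*H)) (|ξ/r^2| ^ (2*ε-2*H-1))) := by
      refine integral_mono_of_nonneg hfnn hg ?_
      filter_upwards [hae] with ξ hξ0
      exact pointwise_large hH0 hH1 hcase hs hst ht hε hεH hξ0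
    have hcomp : (∫ ξ : ℝ, min (|ξ/r^2| ^ (1-2*H)) (|ξ/r^2| ^ (2*ε-2*H-1))) = r^2 * M := by
      rw [MeasureTheory.Measure.integral_comp_div
        (fun x : ℝ => min (|x| ^ (1-2*H)) (|x| ^ (2*ε-2*H-1))) (r^2)]
      rw [smul_eq_mul, abs_of_pos hr2, hMdef]
    have hint : (∫ ξ : ℝ, 36*(t-s)^(2*ε) *
        (r^(4*ε-4*H-2) * min (|ξ/r^2| ^ (1-2*H)) (|ξ/r^2| ^ (2*ε-2*H-1))))
        = 36*(t-s)^(2*ε) * (r^(4*ε-4*H-2) * (r^2 * M)) := by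
      rw [integral_const_mul, integral_const_mul, hcomp]
    rw [hint] at hle
    refine hle.trans ?_
    rw [le_div_iff₀ hden_pos]
    have e1 : r^(4*ε-4*H-2) * r^2 = r^(4*ε-4*H) := by
      rw [← Real.rpow_two, ← Real.rpow_add hr]
      congr 1; ring
    have e2 : r^(4*ε-4*H) * r^(4*(H-ε)) = 1 := by
      rw [← Real.rpow_add hr]
      have : 4*ε-4*H + 4*(H-ε) = 0 := by ring
      rw [this, Real.rpow_zero]
    have e3 : r^(4*ε-4*H) ≤ 1 :=
      Real.rpow_le_one_of_one_le_of_nonpos hcase (by linarith)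
    have key : 36*(t-s)^(2*ε) * (r^(4*ε-4*H-2) * (r^2 * M)) =
        36*(t-s)^(2*ε) * (r^(4*ε-4*H) * M) := by
      rw [show r^(4*ε-4*H-2) * (r^2 * M) = (r^(4*ε-4*H-2) * r^2) * M from by ring, e1]
    rw [key]
    have hrpow_nn : (0:ℝ) ≤ r^(4*ε-4*H) := (Real.rpow_pos_of_pos hr _).le
    nlinarith [mul_nonneg hδ2ε hM0, mul_nonneg hδ2ε (mul_nonneg hrpow_nn hM0),
      mul_nonneg (mul_nonneg hδ2ε hrpow_nn) hM0]
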